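/- With G = W R Wᵀ as in the MIMO Compute-and-Forward setup, the smallest eigenvalue of G equals 1/(1 + P·γ_max²) where γ_max² is the largest eigenvalue of HHᵀ, and consequently every nonzero integer minimizer a* of aᵀGa satisfies ‖a*‖ ≤ √(1 + P·γ_max²). -/

import Mathlib

open Matrix BigOperators

lemma quad_eq_diag {n : ℕ} (W : Matrix (Fin n) (Fin n) ℝ)
    (r : Fin n → ℝ) (x : Fin n → ℝ) :
    x ⬝ᵥ (W * Matrix.diagonal r * Wᵀ) *ᵥ x = ∑ i, r i * (Wᵀ *ᵥ x) i ^ 2 := by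
  have h1 : (W * Matrix.diagonal r * Wᵀ) *ᵥ x
      = W *ᵥ (Matrix.diagonal r *ᵥ (Wᵀ *ᵥ x)) := by
    rw [mulVec_mulVec, mulVec_mulVec]
  rw [h1, dotProduct_mulVec, ← mulVec_transpose]
  simp only [dotProduct, mulVec_diagonal]
  refine Finset.sum_congr rfl fun i _ => by ring

lemma dot_self_eq {n : ℕ} (W : Matrix (Fin n) (Fin n) ℝ) (hW : Wᵀ * W = 1)
    (x : Fin n → ℝ) : ∑ i, (Wᵀ *ᵥ x) i ^ 2 = x ⬝ᵥ x := by
  have h : (Wᵀ *ᵥ x) ⬝ᵥ (Wᵀ *ᵥ x) = x ⬝ᵥ x := by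
    rw [dotProduct_mulVec, vecMul_transpose, mulVec_mulVec,
      mul_eq_one_comm.mp hW, one_mulVec]
  rw [← h]
  simp [dotProduct, sq]

lemma quad_lower {n : ℕ} (W : Matrix (Fin n) (Fin n) ℝ) (hW : Wᵀ * W = 1)
    (r : Fin n → ℝ) (c : ℝ) (hc : ∀ i, c ≤ r i) (x : Fin n → ℝ) :
    c * (x ⬝ᵥ x) ≤ x ⬝ᵥ (W * Matrix.diagonal r * Wᵀ) *ᵥ x := by
  rw [quad_eq_diag W r x, ← dot_self_eq W hW x, Finset.mul_sum]
  exact Finset.sum_le_sum fun i _ => mul_le_mul_of_nonneg_right (hc i) (sq_nonneg _)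

lemma col_unit {n : ℕ} (W : Matrix (Fin n) (Fin n) ℝ) (hW : Wᵀ * W = 1) (i0 : Fin n) :
    Wᵀ *ᵥ (fun j => W j i0) = Pi.single i0 1 := by
  funext i
  have := congrFun (congrFun hW i) i0
  simp only [Matrix.mul_apply, transpose_apply, Matrix.one_apply] at this
  simp only [mulVec, dotProduct, transpose_apply]
  rw [this]
  simp [Pi.single_apply]

lemma quad_col {n : ℕ} (W : Matrix (Fin n) (Fin n) ℝ) (hW : Wᵀ * W = 1)
    (r : Fin n → ℝ) (i0 : Fin n) :
    (fun j => W j i0) ⬝ᵥ (W * Matrix.diagonal r * Wᵀ) *ᵥ (fun j => W j i0) = r i0 := by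
  rw [quad_eq_diag W r _, col_unit W hW i0]
  simp [Pi.single_apply, sq, mul_ite]

lemma col_norm {n : ℕ} (W : Matrix (Fin n) (Fin n) ℝ) (hW : Wᵀ * W = 1) (i0 : Fin n) :
    (fun j => W j i0) ⬝ᵥ (fun j => W j i0) = 1 := by
  have := dot_self_eq W hW (fun j => W j i0)
  rw [col_unit W hW i0] at this
  rw [← this]
  simp [Pi.single_apply, sq]

theorem stmt14 {n k : ℕ} [NeZero n] (hk : 1 ≤ k) (hnk : k < n)
    (H : Matrix (Fin n) (Fin k) ℝ) (P : ℝ) (hP : 0 < P)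
    (W : Matrix (Fin n) (Fin n) ℝ) (hW : Wᵀ * W = 1)
    (γ : Fin n → ℝ)
    (hHHt : H * Hᵀ =
      W * Matrix.diagonal (fun i : Fin n => if (i : ℕ) < k then (γ i) ^ 2 else 0) * Wᵀ)
    (γmax2 : ℝ)
    (hγub : ∀ i : Fin n, (i : ℕ) < k → (γ i) ^ 2 ≤ γmax2)
    (hγmem : ∃ i : Fin n, (i : ℕ) < k ∧ (γ i) ^ 2 = γmax2)
    (hγnonneg : 0 ≤ γmax2)
    (R : Matrix (Fin n) (Fin n) ℝ)
    (hR : R = Matrix.diagonal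
      (fun i : Fin n => if (i : ℕ) < k then 1 / (1 + P * (γ i) ^ 2) else 1))
    (G : Matrix (Fin n) (Fin n) ℝ) (hG : G = W * R * Wᵀ)
    (hGH : G.IsHermitian) :
    (⨅ i, hGH.eigenvalues i) = 1 / (1 + P * γmax2) ∧
    ∀ a : Fin n → ℤ, a ≠ 0 →
      (∀ b : Fin n → ℤ, b ≠ 0 →
        (fun i => (a i : ℝ)) ⬝ᵥ G.mulVec (fun i => (a i : ℝ)) ≤
        (fun i => (b i : ℝ)) ⬝ᵥ G.mulVec (fun i => (b i : ℝ))) →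
      Real.sqrt (∑ i, ((a i : ℝ)) ^ 2) ≤ Real.sqrt (1 + P * γmax2) := by
  obtain ⟨i0, hi0k, hi0⟩ := hγmem
  set r : Fin n → ℝ := fun i => if (i : ℕ) < k then 1 / (1 + P * (γ i) ^ 2) else 1 with hr
  set c : ℝ := 1 / (1 + P * γmax2) with hc
  have hden : (0:ℝ) < 1 + P * γmax2 := by positivity
  have hcpos : (0:ℝ) < c := by positivity
  have hdi : ∀ i : Fin n, (0:ℝ) < 1 + P * (γ i) ^ 2 := fun i => by positivity
  have hcle : ∀ i, c ≤ r i := by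
    intro i
    simp only [hr]
    split_ifs with h
    · exact one_div_le_one_div_of_le (hdi i) (by nlinarith [hγub i h])
    · rw [hc]
      rw [div_le_one hden]
      nlinarith
  have hrle1 : ∀ i, r i ≤ 1 := by
    intro i
    simp only [hr]
    split_ifs with h
    · rw [div_le_one (hdi i)]
      nlinarith [sq_nonneg (γ i)]
    · exact le_refl 1
  have hri0 : r i0 = c := by simp [hr, hc, hi0k, hi0]
  have hGeq : G = W * Matrix.diagonal r * Wᵀ := by rw [hG, hR]
  -- quadratic lower bound for G
  have hquadG : ∀ x : Fin n → ℝ, c * (x ⬝ᵥ x) ≤ x ⬝ᵥ G *ᵥ x := by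
    intro x
    rw [hGeq]
    exact quad_lower W hW r c hcle x
  -- eigen decomposition
  set U : Matrix (Fin n) (Fin n) ℝ := (hGH.eigenvectorUnitary : Matrix (Fin n) (Fin n) ℝ) with hUdef
  have hstarU : star U = Uᵀ := by
    ext i j
    simp [Matrix.star_apply]
  have hU : Uᵀ * U = 1 := by
    rw [← hstarU]
    exact (hGH.eigenvectorUnitary.2).1
  have hGdecomp : G = U * Matrix.diagonal hGH.eigenvalues * Uᵀ := by
    have h1 : (RCLike.ofReal ∘ hGH.eigenvalues : Fin n → ℝ) = hGH.eigenvalues := rfl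
    have := hGH.spectral_theorem
    rw [h1, Unitary.conjStarAlgAut_apply] at this
    change G = U * Matrix.diagonal hGH.eigenvalues * star U at this
    rwa [hstarU] at this
  have hb : BddBelow (Set.range hGH.eigenvalues) :=
    (Set.finite_range _).bddBelow
  constructor
  · apply le_antisymm
    · -- ⨅ ≤ c  via the column i0 of W
      set x0 : Fin n → ℝ := fun j => W j i0 with hx0
      have h1 : x0 ⬝ᵥ G *ᵥ x0 = c := by
        rw [hGeq, quad_col W hW r i0, hri0]
      have h2 := quad_lower U hU hGH.eigenvalues (⨅ i, hGH.eigenvalues i)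
        (fun i => ciInf_le hb i) x0
      rw [← hGdecomp, h1, col_norm W hW i0, mul_one] at h2
      exact h2
    · -- c ≤ each eigenvalue
      refine le_ciInf fun i => ?_
      set v : Fin n → ℝ := ⇑(hGH.eigenvectorBasis i) with hv
      have hev : G *ᵥ v = hGH.eigenvalues i • v := hGH.mulVec_eigenvectorBasis i
      have hvne : v ≠ 0 := by
        intro hz
        exact hGH.eigenvectorBasis.orthonormal.ne_zero i (by ext j; exact congrFun hz j)
      have hvv : (0:ℝ) < v ⬝ᵥ v :=
        lt_of_le_of_ne (Finset.sum_nonneg fun j _ => mul_self_nonneg _)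
          (fun h => hvne (dotProduct_self_eq_zero.mp h.symm))
      have := hquadG v
      rw [hev] at this
      have h3 : v ⬝ᵥ (hGH.eigenvalues i • v) = hGH.eigenvalues i * (v ⬝ᵥ v) := by
        simp [dotProduct, Finset.mul_sum]; ring_nf
        exact Finset.sum_congr rfl fun j _ => by ring
      rw [h3] at this
      exact le_of_mul_le_mul_right this hvv
  · -- part 2
    intro a ha hmin
    -- find a diagonal entry of G that is ≤ 1
    have htr : ∑ j, G j j ≤ ∑ _j : Fin n, (1:ℝ) := by
      have h1 : ∑ j, G j j = Matrix.trace G := rfl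
      have h2 : Matrix.trace G = ∑ i, r i := by
        rw [hGeq, Matrix.trace_mul_cycle, hW, Matrix.one_mul,
          Matrix.trace_diagonal]
      rw [h1, h2]
      exact Finset.sum_le_sum fun i _ => hrle1 i
    obtain ⟨j, -, hj⟩ := Finset.exists_le_of_sum_le Finset.univ_nonempty htr
    set b : Fin n → ℤ := Pi.single j 1 with hbdef
    have hbne : b ≠ 0 := by
      intro h
      have := congrFun h j
      simp [hbdef] at this
    have hbcast : (fun i => ((b i : ℝ))) = Pi.single j (1:ℝ) := by
      funext i
      simp [hbdef, Pi.single_apply, apply_ite (fun z : ℤ => (z : ℝ))]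
    have hbq : (fun i => ((b i : ℝ))) ⬝ᵥ G *ᵥ (fun i => ((b i : ℝ))) = G j j := by
      rw [hbcast]
      simp [mulVec, dotProduct, Pi.single_apply]
    have hle1 : (fun i => ((a i : ℝ))) ⬝ᵥ G *ᵥ (fun i => ((a i : ℝ))) ≤ 1 := by
      calc (fun i => ((a i : ℝ))) ⬝ᵥ G *ᵥ (fun i => ((a i : ℝ)))
          ≤ (fun i => ((b i : ℝ))) ⬝ᵥ G *ᵥ (fun i => ((b i : ℝ))) := hmin b hbne
        _ = G j j := hbq
        _ ≤ 1 := hj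
    have hq := hquadG (fun i => ((a i : ℝ)))
    have hsum : ∑ i, ((a i : ℝ)) ^ 2 ≤ 1 + P * γmax2 := by
      have hdot : (fun i => ((a i : ℝ))) ⬝ᵥ (fun i => ((a i : ℝ))) = ∑ i, ((a i : ℝ)) ^ 2 := by
        simp [dotProduct, sq]
      rw [hdot] at hq
      have : c * (∑ i, ((a i : ℝ)) ^ 2) ≤ 1 := le_trans hq hle1
      rw [hc, div_mul_eq_mul_div, div_le_one hden, one_mul] at this
      linarith
    exact Real.sqrt_le_sqrt hsum
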